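/- For any β ∈ [0,1], a ≥ 0, z ∈ ℝ^d with |z| ≤ 1, and u ∈ 𝒮(ℝ^d), one has ∫_{|x|≥a}|u(x+z) − u(x)| dx ≤ 2^{1−β} (∫_{|x|≥(a−1)∨0}|u(x)| dx)^{1−β} (∫_{|x|≥(a−1)∨0}|∇u(x)| dx)^{β} |z|^{β}. -/

import Mathlib

open MeasureTheory
open scoped ENNReal

noncomputable section

abbrev Rd (d : ℕ) := EuclideanSpace ℝ (Fin d)

/-- for `β ∈ [0,1]`, `a ≥ 0`, `|z| ≤ 1` and Schwartz `u`,
`∫_{|x|≥a}|u(x+z) − u(x)| dx ≤ 2^{1−β} (∫_{|x|≥(a−1)∨0}|u|)^{1−β} (∫_{|x|≥(a−1)∨0}|∇u|)^β |z|^β`. -/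
theorem statement_5 (d : ℕ) (β a : ℝ) (hβ : β ∈ Set.Icc (0:ℝ) 1) (ha : 0 ≤ a)
    (z : Rd d) (hz : ‖z‖ ≤ 1) (u : SchwartzMap (Rd d) ℝ) :
    (∫ x in {x : Rd d | a ≤ ‖x‖}, |u (x + z) - u x|)
      ≤ 2 ^ (1 - β)
        * (∫ x in {x : Rd d | max (a - 1) 0 ≤ ‖x‖}, |u x|) ^ (1 - β)
        * (∫ x in {x : Rd d | max (a - 1) 0 ≤ ‖x‖}, ‖gradient (⇑u) x‖) ^ β
        * ‖z‖ ^ β := by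
  obtain ⟨hβ0, hβ1⟩ := hβ
  set S : Set (Rd d) := {x : Rd d | a ≤ ‖x‖} with hSdef
  set T : Set (Rd d) := {x : Rd d | max (a - 1) 0 ≤ ‖x‖} with hTdef
  set g : Rd d → ℝ := fun x => ‖fderiv ℝ u x‖ with hgdef
  have hgrad : ∀ x : Rd d, ‖gradient (⇑u) x‖ = g x := fun x => by
    rw [gradient]; exact LinearIsometryEquiv.norm_map _ _
  have hgc : Continuous g := ((u.smooth ⊤).continuous_fderiv (by norm_num)).norm
  have hgint : Integrable g (volume : Measure (Rd d)) := by
    have : Integrable (fun x => fderiv ℝ u x) (volume : Measure (Rd d)) := by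
      have := (SchwartzMap.fderivCLM ℝ (Rd d) ℝ u).integrable (μ := volume)
      have h2 : (⇑(SchwartzMap.fderivCLM ℝ (Rd d) ℝ u)) = fun x => fderiv ℝ u x := by
        ext1 x; simp [SchwartzMap.fderivCLM_apply]
      rw [h2] at this; exact this
    exact this.norm
  have hdiffint : Integrable (fun x => |u (x + z) - u x|) (volume : Measure (Rd d)) :=
    ((u.integrable.comp_add_right z).sub u.integrable).abs
  set A : ℝ := ∫ x in S, |u (x + z) - u x| with hAdef
  set I0 : ℝ := ∫ x in T, |u x| with hI0def
  set I1 : ℝ := ∫ x in T, g x with hI1def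
  have hA0 : 0 ≤ A := integral_nonneg fun x => abs_nonneg _
  have hI00 : 0 ≤ I0 := integral_nonneg fun x => abs_nonneg _
  have hI10 : 0 ≤ I1 := integral_nonneg fun x => norm_nonneg _
  -- generic shift bound at the level of real integrals
  have shift : ∀ w : Rd d, ‖w‖ ≤ 1 → ∀ f : Rd d → ℝ,
      Integrable f (volume : Measure (Rd d)) → (∀ x, 0 ≤ f x) →
      (∫ x in S, f (x + w)) ≤ ∫ x in T, f x := by
    intro w hw f hfint hf0
    have hmp := measurePreserving_add_right (volume : Measure (Rd d)) w
    have hemb := (MeasurableEquiv.addRight w).measurableEmbedding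
    have hpre : S ⊆ (fun x => x + w) ⁻¹' T := by
      intro x hx
      simp only [Set.mem_preimage, hTdef, Set.mem_setOf_eq]
      refine max_le ?_ (norm_nonneg _)
      have h1 : ‖x‖ ≤ ‖x + w‖ + ‖w‖ := by
        calc ‖x‖ = ‖(x + w) - w‖ := by rw [add_sub_cancel_right]
          _ ≤ ‖x + w‖ + ‖w‖ := norm_sub_le _ _
      have hx' : a ≤ ‖x‖ := hx
      linarith
    calc (∫ x in S, f (x + w))
        ≤ ∫ x in (fun x => x + w) ⁻¹' T, f (x + w) :=
          setIntegral_mono_set ((hfint.comp_add_right w).integrableOn)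
            (ae_of_all _ fun x => hf0 _) (HasSubset.Subset.eventuallyLE hpre)
      _ = ∫ y in T, f y := hmp.setIntegral_preimage_emb hemb f T
  -- Step 1 : A ≤ 2 * I0
  have h1 : A ≤ 2 * I0 := by
    have hmono : A ≤ ∫ x in S, (|u (x + z)| + |u x|) := by
      apply integral_mono hdiffint.integrableOn
        (((u.integrable.comp_add_right z).abs.add u.integrable.abs).integrableOn)
      intro x
      exact abs_sub _ _
    rw [integral_add ((u.integrable.comp_add_right z).abs.integrableOn)
      (u.integrable.abs.integrableOn)] at hmono
    have e1 := shift z hz (fun x => |u x|) u.integrable.abs (fun x => abs_nonneg _)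
    have e2 := shift 0 (by simp) (fun x => |u x|) u.integrable.abs (fun x => abs_nonneg _)
    simp only [add_zero] at e2
    linarith
  -- pointwise FTC bound
  have hpt : ∀ x : Rd d, |u (x + z) - u x| ≤ ∫ t in (0:ℝ)..1, g (x + t • z) * ‖z‖ := by
    intro x
    have hder : ∀ t : ℝ, HasDerivAt (fun s : ℝ => u (x + s • z))
        ((fderiv ℝ u (x + t • z)) z) t := by
      intro t
      have h1' : HasFDerivAt u (fderiv ℝ u (x + t • z)) (x + t • z) :=
        (u.differentiable.differentiableAt).hasFDerivAt
      have h2' : HasDerivAt (fun s : ℝ => x + s • z) z t := by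
        simpa using ((hasDerivAt_id t).smul_const z).const_add x
      exact h1'.comp_hasDerivAt t h2'
    have hcontf : Continuous fun t : ℝ => (fderiv ℝ u (x + t • z)) z := by
      have hc : Continuous fun y : Rd d => fderiv ℝ u y :=
        (u.smooth ⊤).continuous_fderiv (by norm_num)
      exact (isBoundedBilinearMap_apply.continuous.comp
        ((hc.comp (continuous_const.add (continuous_id.smul continuous_const))).prodMk
          continuous_const))
    have hint : IntervalIntegrable (fun t : ℝ => (fderiv ℝ u (x + t • z)) z)
        volume 0 1 := hcontf.intervalIntegrable _ _
    have heq : u (x + z) - u x = ∫ t in (0:ℝ)..1, (fderiv ℝ u (x + t • z)) z := by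
      have := intervalIntegral.integral_eq_sub_of_hasDerivAt
        (f := fun s : ℝ => u (x + s • z)) (fun t _ => hder t) hint
      simp at this
      rw [this]
    rw [heq]
    calc |∫ t in (0:ℝ)..1, (fderiv ℝ u (x + t • z)) z|
        ≤ ∫ t in (0:ℝ)..1, |(fderiv ℝ u (x + t • z)) z| :=
          intervalIntegral.abs_integral_le_integral_abs zero_le_one
      _ ≤ ∫ t in (0:ℝ)..1, g (x + t • z) * ‖z‖ := by
          apply intervalIntegral.integral_mono_on zero_le_one hint.abs
          · exact ((hgc.comp (continuous_const.add
              (continuous_id.smul continuous_const))).mul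
              continuous_const).intervalIntegrable _ _
          · intro t _
            exact (fderiv ℝ u (x + t • z)).le_opNorm z
  -- Step 2 : A ≤ I1 * ‖z‖ via lintegral Fubini
  have h2 : A ≤ I1 * ‖z‖ := by
    set J : ℝ≥0∞ := ∫⁻ x in T, ENNReal.ofReal (g x) with hJdef
    have hJeq : J = ENNReal.ofReal I1 :=
      (ofReal_integral_eq_lintegral_ofReal hgint.integrableOn
        (ae_of_all _ fun x => norm_nonneg _)).symm
    have hFc : Continuous fun p : Rd d × ℝ => g (p.1 + p.2 • z) * ‖z‖ :=
      ((hgc.comp (continuous_fst.add (continuous_snd.smul continuous_const))).mul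
        continuous_const)
    have hptE : ∀ x : Rd d, ENNReal.ofReal |u (x + z) - u x|
        ≤ ∫⁻ t in Set.Ioc (0:ℝ) 1, ENNReal.ofReal (g (x + t • z) * ‖z‖) := by
      intro x
      have hcont : Continuous fun t : ℝ => g (x + t • z) * ‖z‖ :=
        ((hgc.comp (continuous_const.add (continuous_id.smul continuous_const))).mul
          continuous_const)
      have hci : IntegrableOn (fun t : ℝ => g (x + t • z) * ‖z‖)
          (Set.Ioc (0:ℝ) 1) volume :=
        (hcont.integrableOn_Icc).mono_set Set.Ioc_subset_Icc_self
      calc ENNReal.ofReal |u (x + z) - u x|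
          ≤ ENNReal.ofReal (∫ t in (0:ℝ)..1, g (x + t • z) * ‖z‖) :=
            ENNReal.ofReal_le_ofReal (hpt x)
        _ = ∫⁻ t in Set.Ioc (0:ℝ) 1, ENNReal.ofReal (g (x + t • z) * ‖z‖) := by
            rw [intervalIntegral.integral_of_le zero_le_one,
              ofReal_integral_eq_lintegral_ofReal hci
                (ae_of_all _ fun t => mul_nonneg (norm_nonneg _) (norm_nonneg _))]
    have hAE : ENNReal.ofReal A ≤ J * ENNReal.ofReal ‖z‖ := by
      have hA' : ENNReal.ofReal A = ∫⁻ x in S, ENNReal.ofReal |u (x + z) - u x| :=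
        ofReal_integral_eq_lintegral_ofReal hdiffint.integrableOn
          (ae_of_all _ fun x => abs_nonneg _)
      rw [hA']
      calc ∫⁻ x in S, ENNReal.ofReal |u (x + z) - u x|
          ≤ ∫⁻ x in S, ∫⁻ t in Set.Ioc (0:ℝ) 1,
              ENNReal.ofReal (g (x + t • z) * ‖z‖) := lintegral_mono fun x => hptE x
        _ = ∫⁻ t in Set.Ioc (0:ℝ) 1, ∫⁻ x in S,
              ENNReal.ofReal (g (x + t • z) * ‖z‖) := by
            apply lintegral_lintegral_swap
            exact (ENNReal.continuous_ofReal.comp hFc).measurable.aemeasurable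
        _ ≤ ∫⁻ _t in Set.Ioc (0:ℝ) 1, J * ENNReal.ofReal ‖z‖ := by
            refine setLIntegral_mono' measurableSet_Ioc fun t ht => ?_
            have hrw : (∫⁻ x in S, ENNReal.ofReal (g (x + t • z) * ‖z‖))
                = (∫⁻ x in S, ENNReal.ofReal (g (x + t • z))) * ENNReal.ofReal ‖z‖ := by
              simp_rw [ENNReal.ofReal_mul' (norm_nonneg z)]
              exact lintegral_mul_const' _ _ (by simp)
            rw [hrw]
            have hmp := measurePreserving_add_right (volume : Measure (Rd d)) (t • z)
            have hemb := (MeasurableEquiv.addRight (t • z)).measurableEmbedding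
            have hwnorm : ‖t • z‖ ≤ 1 := by
              rw [norm_smul, Real.norm_eq_abs, abs_of_pos ht.1]
              nlinarith [ht.2, ht.1.le, hz, norm_nonneg z]
            have hpre : S ⊆ (fun x => x + t • z) ⁻¹' T := by
              intro x hx
              simp only [Set.mem_preimage, hTdef, Set.mem_setOf_eq]
              refine max_le ?_ (norm_nonneg _)
              have h1' : ‖x‖ ≤ ‖x + t • z‖ + ‖t • z‖ := by
                calc ‖x‖ = ‖(x + t • z) - t • z‖ := by rw [add_sub_cancel_right]
                  _ ≤ ‖x + t • z‖ + ‖t • z‖ := norm_sub_le _ _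
              have hx' : a ≤ ‖x‖ := hx
              linarith
            have hb : (∫⁻ x in S, ENNReal.ofReal (g (x + t • z))) ≤ J := by
              calc ∫⁻ x in S, ENNReal.ofReal (g (x + t • z))
                  ≤ ∫⁻ x in (fun x => x + t • z) ⁻¹' T,
                      ENNReal.ofReal (g (x + t • z)) := lintegral_mono_set hpre
                _ = ∫⁻ y in T, ENNReal.ofReal (g y) :=
                    hmp.setLIntegral_comp_preimage_emb hemb (fun y => ENNReal.ofReal (g y)) T
                _ = J := rfl
            exact mul_le_mul_left hb _
        _ = J * ENNReal.ofReal ‖z‖ := by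
            rw [setLIntegral_const, Real.volume_Ioc]
            norm_num
    rw [hJeq, ← ENNReal.ofReal_mul hI10] at hAE
    exact (ENNReal.ofReal_le_ofReal_iff (mul_nonneg hI10 (norm_nonneg _))).mp hAE
  -- conclusion: interpolation
  have hgoalI1 : (∫ x in T, ‖gradient (⇑u) x‖) = I1 := by
    rw [hI1def]
    exact integral_congr_ae (ae_of_all _ fun x => hgrad x)
  rw [hgoalI1]
  have hrhs : 2 ^ (1 - β) * I0 ^ (1 - β) * I1 ^ β * ‖z‖ ^ β
      = (2 * I0) ^ (1 - β) * (I1 * ‖z‖) ^ β := by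
    rw [Real.mul_rpow two_pos.le hI00, Real.mul_rpow hI10 (norm_nonneg z)]; ring
  rw [hrhs]
  have hR0 : 0 ≤ (2 * I0) ^ (1 - β) * (I1 * ‖z‖) ^ β :=
    mul_nonneg (Real.rpow_nonneg (mul_nonneg two_pos.le hI00) _)
      (Real.rpow_nonneg (mul_nonneg hI10 (norm_nonneg _)) _)
  rcases eq_or_lt_of_le hA0 with hA0' | hA0'
  · rw [← hA0']
    exact hR0
  · calc A = A ^ ((1 - β) + β) := by rw [sub_add_cancel, Real.rpow_one]
      _ = A ^ (1 - β) * A ^ β := Real.rpow_add hA0' _ _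
      _ ≤ (2 * I0) ^ (1 - β) * (I1 * ‖z‖) ^ β :=
          mul_le_mul (Real.rpow_le_rpow hA0 h1 (by linarith))
            (Real.rpow_le_rpow hA0 h2 hβ0) (Real.rpow_nonneg hA0 _)
            (Real.rpow_nonneg (mul_nonneg two_pos.le hI00) _)
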